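/- Let p ≥ 2 and let G be a 2p-regular graph with a (p+2)-star colouring f. Then all p+2 colour classes of f have the same cardinality, namely |V(G)|/(p+2); in particular f is an equitable colouring. -/

import Mathlib

open Finset

/-- A star colouring: a proper colouring with no bicoloured 4-vertex path. -/
def IsStarColoring {V : Type*} {α : Type*} (G : SimpleGraph V) (f : V → α) : Prop :=
  (∀ ⦃u v : V⦄, G.Adj u v → f u ≠ f v) ∧
  ∀ ⦃a b c d : V⦄, G.Adj a b → G.Adj b c → G.Adj c d →
    a ≠ c → a ≠ d → b ≠ d → ¬(f a = f c ∧ f b = f d)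

section StarAux

variable {V : Type*} [Fintype V] {p : ℕ}

/-- number of neighbours of `v` coloured `c` -/
private def ncA (G : SimpleGraph V) [DecidableRel G.Adj] (f : V → Fin (p + 2))
    (v : V) (c : Fin (p + 2)) : ℕ :=
  ((G.neighborFinset v).filter fun u => f u = c).card

private lemma ncA_def (G : SimpleGraph V) [DecidableRel G.Adj] (f : V → Fin (p + 2))
    (v : V) (c : Fin (p + 2)) :
    ncA G f v c = ((G.neighborFinset v).filter fun u => f u = c).card := rfl

private theorem keyA (G : SimpleGraph V) [DecidableRel G.Adj] (hp : 2 ≤ p)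
    (hreg : ∀ v : V, (G.neighborFinset v).card = 2 * p)
    (f : V → Fin (p + 2)) (hf : IsStarColoring G f) :
    ∀ i : Fin (p + 2),
      (p + 2) * (Finset.univ.filter fun v => f v = i).card = Fintype.card V := by
  classical
  have memN : ∀ v u : V, u ∈ G.neighborFinset v ↔ G.Adj v u := fun v u =>
    G.mem_neighborFinset v u
  set n := Fintype.card V with hn
  -- basic facts about ncA
  have nc_self : ∀ v : V, ncA G f v (f v) = 0 := by
    intro v
    apply Finset.card_eq_zero.mpr
    rw [Finset.filter_eq_empty_iff]
    intro u hu
    exact fun h => (hf.1 ((memN _ _).mp hu).symm) h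
  have sum_nc : ∀ v : V, ∑ c, ncA G f v c = 2 * p := by
    intro v
    have h := Finset.card_eq_sum_card_fiberwise
      (f := f) (s := G.neighborFinset v) (t := univ) (fun x _ => mem_univ _)
    rw [hreg v] at h
    exact h.symm
  have nc_pos : ∀ v u : V, G.Adj v u → 1 ≤ ncA G f v (f u) := by
    intro v u h
    apply Finset.card_pos.mpr
    exact ⟨u, Finset.mem_filter.mpr ⟨(memN _ _).mpr h, rfl⟩⟩
  -- star colouring: not both endpoints of an edge have ≥ 2 neighbours of other's colour
  have not_both : ∀ v u : V, G.Adj v u →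
      ¬(2 ≤ ncA G f v (f u) ∧ 2 ≤ ncA G f u (f v)) := by
    rintro v u h ⟨h1, h2⟩
    rw [ncA_def] at h1
    rw [ncA_def] at h2
    obtain ⟨w, hw, hwu⟩ := Finset.exists_mem_ne
      (s := (G.neighborFinset v).filter fun x => f x = f u) (by omega) u
    obtain ⟨w', hw', hw'v⟩ := Finset.exists_mem_ne
      (s := (G.neighborFinset u).filter fun x => f x = f v) (by omega) v
    rw [Finset.mem_filter, memN] at hw hw'
    have hfw : f w = f u := hw.2
    have hfw' : f w' = f v := hw'.2
    have hfuv : f u ≠ f v := hf.1 (G.adj_symm h)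
    exact hf.2 (G.adj_symm hw.1) h hw'.1 hwu
      (fun e => hfuv (by rw [← hfw, e, hfw'])) hw'v.symm ⟨hfw, hfw'.symm⟩
  -- b v ≤ p
  have hble : ∀ v : V, (univ.filter fun c => ncA G f v c = 1).card ≤ p := by
    intro v
    by_contra hlt
    push_neg at hlt
    have hsub : (univ.filter fun c => ncA G f v c = 1) ⊆ univ.erase (f v) := by
      intro c hc
      rw [Finset.mem_filter] at hc
      refine Finset.mem_erase.mpr ⟨?_, mem_univ _⟩
      intro e; rw [e, nc_self v] at hc; omega
    have hce : (univ.erase (f v)).card = p + 1 := by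
      rw [Finset.card_erase_of_mem (mem_univ _), card_univ, Fintype.card_fin]
      omega
    have heq : (univ.filter fun c => ncA G f v c = 1) = univ.erase (f v) :=
      Finset.eq_of_subset_of_card_le hsub (by omega)
    have h1 : ∑ c ∈ univ.erase (f v), ncA G f v c + ncA G f v (f v) = 2 * p := by
      rw [Finset.sum_erase_add _ _ (mem_univ (f v))]; exact sum_nc v
    have h2 : ∑ c ∈ univ.erase (f v), ncA G f v c = p + 1 := by
      rw [← heq]
      rw [Finset.sum_congr rfl (fun c hc => (Finset.mem_filter.mp hc).2)]
      simp [heq, hce]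
    rw [nc_self v] at h1
    omega
  -- fiberwise decomposition of sums over neighbourhoods
  have fiber : ∀ (v : V) (h : Fin (p + 2) → ℕ),
      ∑ u ∈ G.neighborFinset v, h (f u) = ∑ c, ncA G f v c * h c := by
    intro v h
    rw [← Finset.sum_fiberwise (G.neighborFinset v) f (fun u => h (f u))]
    refine Finset.sum_congr rfl fun c _ => ?_
    rw [Finset.sum_congr rfl (fun u hu => by rw [(Finset.mem_filter.mp hu).2]),
      Finset.sum_const, smul_eq_mul]
    rfl
  -- inner singleton count equals b v
  have inner_b : ∀ v : V,
      (∑ u ∈ G.neighborFinset v, if ncA G f v (f u) = 1 then 1 else 0)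
        = (univ.filter fun c => ncA G f v c = 1).card := by
    intro v
    rw [fiber v (fun c => if ncA G f v c = 1 then 1 else 0), Finset.card_filter]
    refine Finset.sum_congr rfl fun c _ => ?_
    by_cases h : ncA G f v c = 1 <;> simp [h]
  -- swap lemma
  have swap : ∀ (W : V → V → ℕ),
      ∑ v, ∑ u ∈ G.neighborFinset v, W v u = ∑ v, ∑ u ∈ G.neighborFinset v, W u v := by
    intro W
    have h1 : ∀ (W : V → V → ℕ), ∑ v, ∑ u ∈ G.neighborFinset v, W v u
        = ∑ v, ∑ u, if G.Adj v u then W v u else 0 := by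
      intro W
      refine Finset.sum_congr rfl fun v _ => ?_
      rw [show G.neighborFinset v = univ.filter (G.Adj v) by ext u; simp,
        Finset.sum_filter]
    rw [h1, h1, Finset.sum_comm]
    refine Finset.sum_congr rfl fun v _ => Finset.sum_congr rfl fun u _ => ?_
    by_cases h : G.Adj u v
    · rw [if_pos h, if_pos (G.adj_symm h)]
    · rw [if_neg h, if_neg (fun h' => h (G.adj_symm h'))]
  -- the double count
  have hS1 : ∑ v : V, (univ.filter fun c => ncA G f v c = 1).card ≤ n * p := by
    calc ∑ v : V, (univ.filter fun c => ncA G f v c = 1).card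
        ≤ ∑ _v : V, p := Finset.sum_le_sum fun v _ => hble v
      _ = n * p := by rw [Finset.sum_const, card_univ, smul_eq_mul]
  have hpoint : ∀ v u : V, G.Adj v u →
      1 ≤ (if ncA G f v (f u) = 1 then 1 else 0) + (if ncA G f u (f v) = 1 then 1 else 0) := by
    intro v u h
    have h1 := nc_pos v u h
    have h2 := nc_pos u v (G.adj_symm h)
    have h3 := not_both v u h
    by_cases e1 : ncA G f v (f u) = 1
    · simp [e1]
    · by_cases e2 : ncA G f u (f v) = 1
      · simp [e2]
      · exact absurd ⟨by omega, by omega⟩ h3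
  have hdouble : ∑ v, ∑ u ∈ G.neighborFinset v,
      ((if ncA G f v (f u) = 1 then 1 else 0) + (if ncA G f u (f v) = 1 then 1 else 0))
      = 2 * (∑ v : V, (univ.filter fun c => ncA G f v c = 1).card) := by
    rw [show (2 : ℕ) * _ = _ + _ from two_mul _]
    rw [← Finset.sum_congr rfl fun v (_ : v ∈ univ) => inner_b v]
    conv_lhs => rw [Finset.sum_congr rfl fun v (_ : v ∈ univ) => Finset.sum_add_distrib]
    rw [Finset.sum_add_distrib]
    congr 1
    rw [swap (fun v u => if ncA G f v (f u) = 1 then 1 else 0)]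
  have hlow : ∑ v, ∑ u ∈ G.neighborFinset v, (1 : ℕ) = n * (2 * p) := by
    rw [Finset.sum_congr rfl fun v (_ : v ∈ univ) => by
      rw [Finset.sum_const, smul_eq_mul, mul_one, hreg v]]
    rw [Finset.sum_const, card_univ, smul_eq_mul]
  have hge : n * (2 * p) ≤ ∑ v, ∑ u ∈ G.neighborFinset v,
      ((if ncA G f v (f u) = 1 then 1 else 0) + (if ncA G f u (f v) = 1 then 1 else 0)) := by
    rw [← hlow]
    refine Finset.sum_le_sum fun v _ => Finset.sum_le_sum fun u hu => ?_
    exact hpoint v u ((memN _ _).mp hu)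
  have hmm : n * (2 * p) = 2 * (n * p) := by ring
  have hSeq : ∑ v : V, (univ.filter fun c => ncA G f v c = 1).card = n * p := by omega
  -- pointwise: b v = p
  have hbp : ∀ v : V, (univ.filter fun c => ncA G f v c = 1).card = p := by
    have := (Finset.sum_eq_sum_iff_of_le (fun v (_ : v ∈ univ) => hble v)).mp
      (by rw [hSeq, Finset.sum_const, card_univ, smul_eq_mul])
    exact fun v => this v (mem_univ v)
  -- pointwise: exactly one singleton end per edge
  have hedge : ∀ v u : V, G.Adj v u →
      (if ncA G f v (f u) = 1 then 1 else 0) + (if ncA G f u (f v) = 1 then 1 else 0) = 1 := by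
    have houter : ∀ v ∈ (univ : Finset V),
        ∑ u ∈ G.neighborFinset v, (1 : ℕ)
        ≤ ∑ u ∈ G.neighborFinset v,
          ((if ncA G f v (f u) = 1 then 1 else 0) + (if ncA G f u (f v) = 1 then 1 else 0)) :=
      fun v _ => Finset.sum_le_sum fun u hu => hpoint v u ((memN _ _).mp hu)
    have hsum_eq : ∑ v, ∑ u ∈ G.neighborFinset v, (1 : ℕ)
        = ∑ v, ∑ u ∈ G.neighborFinset v,
          ((if ncA G f v (f u) = 1 then 1 else 0) + (if ncA G f u (f v) = 1 then 1 else 0)) := by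
      rw [hlow, hdouble, hSeq]; ring
    have h1 := (Finset.sum_eq_sum_iff_of_le houter).mp hsum_eq
    intro v u h
    have h2 := (Finset.sum_eq_sum_iff_of_le (fun u hu =>
      hpoint v u ((memN _ _).mp hu))).mp (h1 v (mem_univ v))
    exact (h2 u ((memN _ _).mpr h)).symm
  -- heavy colour: the unique colour c ≠ f v with ncA ≠ 1
  have hset : ∀ v : V, (univ.filter fun c => ¬ c = f v ∧ ¬ ncA G f v c = 1)
      = univ \ insert (f v) (univ.filter fun c => ncA G f v c = 1) := by
    intro v
    ext c
    simp only [Finset.mem_filter, Finset.mem_sdiff, Finset.mem_insert, mem_univ, true_and]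
    tauto
  have hfvnot : ∀ v : V, f v ∉ (univ.filter fun c => ncA G f v c = 1) := by
    intro v hmem
    have := (Finset.mem_filter.mp hmem).2
    rw [nc_self v] at this
    omega
  have hHcard : ∀ v : V, (univ.filter fun c => ¬ c = f v ∧ ¬ ncA G f v c = 1).card = 1 := by
    intro v
    rw [hset v, Finset.card_sdiff_of_subset (Finset.subset_univ _), card_univ, Fintype.card_fin,
      Finset.card_insert_of_notMem (hfvnot v), hbp v]
    omega
  choose g hg using fun v => Finset.card_eq_one.mp (hHcard v)
  have hgmem : ∀ v : V, ¬ g v = f v ∧ ¬ ncA G f v (g v) = 1 := by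
    intro v
    have : g v ∈ (univ.filter fun c => ¬ c = f v ∧ ¬ ncA G f v c = 1) := by
      rw [hg v]; exact Finset.mem_singleton_self _
    exact (Finset.mem_filter.mp this).2
  have g_ne : ∀ v : V, g v ≠ f v := fun v => (hgmem v).1
  have nonheavy : ∀ v c, ¬ c = f v → ¬ c = g v → ncA G f v c = 1 := by
    intro v c h1 h2
    by_contra h3
    have : c ∈ (univ.filter fun c => ¬ c = f v ∧ ¬ ncA G f v c = 1) :=
      Finset.mem_filter.mpr ⟨mem_univ _, h1, h3⟩
    rw [hg v, Finset.mem_singleton] at this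
    exact h2 this
  have heavyp : ∀ v : V, ncA G f v (g v) = p := by
    intro v
    have hsd := Finset.sum_sdiff (f := fun c => ncA G f v c)
      (Finset.subset_univ (insert (f v) (univ.filter fun c => ncA G f v c = 1)))
    rw [sum_nc v] at hsd
    have h1 : ∑ c ∈ univ \ insert (f v) (univ.filter fun c => ncA G f v c = 1),
        ncA G f v c = ncA G f v (g v) := by
      rw [← hset v, hg v, Finset.sum_singleton]
    have h2 : ∑ c ∈ insert (f v) (univ.filter fun c => ncA G f v c = 1),
        ncA G f v c = p := by
      rw [Finset.sum_insert (hfvnot v), nc_self v,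
        Finset.sum_congr rfl (fun c hc => (Finset.mem_filter.mp hc).2),
        Finset.sum_const, hbp v]
      simp
    rw [h1, h2] at hsd
    omega
  -- edge classification
  have eclass : ∀ v u : V, G.Adj v u → (g u = f v ↔ ¬ f u = g v) := by
    intro v u h
    have hone := hedge v u h
    have hfne : f u ≠ f v := hf.1 (G.adj_symm h)
    constructor
    · intro hgu hfu
      have e1 : ¬ ncA G f v (f u) = 1 := by rw [hfu, heavyp v]; omega
      have e2 : ¬ ncA G f u (f v) = 1 := by rw [← hgu, heavyp u]; omega
      rw [if_neg e1, if_neg e2] at hone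
      omega
    · intro hfu
      by_contra hgu
      have e1 : ncA G f v (f u) = 1 := nonheavy v (f u) hfne hfu
      have e2 : ncA G f u (f v) = 1 := nonheavy u (f v) (fun e => hfne e.symm)
        (fun e => hgu e.symm)
      rw [if_pos e1, if_pos e2] at hone
      omega
  -- final counting
  intro i
  have count1 : ∀ v : V, f v = i → ((G.neighborFinset v).filter fun u => g u = i).card = p := by
    intro v hv
    have hfe : ((G.neighborFinset v).filter fun u => g u = i)
        = (G.neighborFinset v).filter fun u => ¬ f u = g v := by
      apply Finset.filter_congr
      intro u hu
      rw [← hv]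
      exact eclass v u ((memN v u).mp hu)
    have hheavy := heavyp v
    rw [ncA_def] at hheavy
    rw [hfe, Finset.filter_not, Finset.card_sdiff_of_subset (Finset.filter_subset _ _), hreg v, hheavy]
    omega
  have count2 : ∀ v : V, f v = i →
      ((G.neighborFinset v).filter fun u => ¬ g u = i).card = p := by
    intro v hv
    have h := Finset.card_filter_add_card_filter_not
      (s := G.neighborFinset v) (p := fun u => g u = i)
    rw [hreg v, count1 v hv] at h
    omega
  -- first double count : |{v : g v = i}| = |V_i|
  have hc1 : ∑ v, ∑ u ∈ G.neighborFinset v, (if f v = i ∧ g u = i then 1 else 0)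
      = p * (univ.filter fun v => f v = i).card := by
    rw [Finset.sum_congr rfl (fun v (_ : v ∈ univ) => show
        ∑ u ∈ G.neighborFinset v, (if f v = i ∧ g u = i then 1 else 0)
          = if f v = i then p else 0 from by
      by_cases hv : f v = i
      · simp only [hv, true_and, if_pos]
        rw [← Finset.card_filter]
        exact count1 v hv
      · simp [hv])]
    rw [← Finset.sum_filter, Finset.sum_const, smul_eq_mul, mul_comm]
  have hc1' : ∑ v, ∑ u ∈ G.neighborFinset v, (if f u = i ∧ g v = i then 1 else 0)
      = p * (univ.filter fun v => g v = i).card := by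
    rw [Finset.sum_congr rfl (fun v (_ : v ∈ univ) => show
        ∑ u ∈ G.neighborFinset v, (if f u = i ∧ g v = i then 1 else 0)
          = if g v = i then p else 0 from by
      by_cases hv : g v = i
      · simp only [hv, and_true, if_pos]
        have h3 : ncA G f v i = p := by rw [← hv, heavyp v]
        rw [ncA_def] at h3
        rw [← Finset.card_filter]
        exact h3
      · simp [hv])]
    rw [← Finset.sum_filter, Finset.sum_const, smul_eq_mul, mul_comm]
  have hA : (univ.filter fun v => g v = i).card = (univ.filter fun v => f v = i).card := by
    have h := (hc1.symm.trans (swap (fun v u => if f v = i ∧ g u = i then 1 else 0))).trans hc1'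
    exact (Nat.eq_of_mul_eq_mul_left (by omega) h).symm
  -- second double count : p * |V_i| = |{v : f v ≠ i ∧ g v ≠ i}|
  have hc2 : ∑ v, ∑ u ∈ G.neighborFinset v, (if f v = i ∧ ¬ g u = i then 1 else 0)
      = p * (univ.filter fun v => f v = i).card := by
    rw [Finset.sum_congr rfl (fun v (_ : v ∈ univ) => show
        ∑ u ∈ G.neighborFinset v, (if f v = i ∧ ¬ g u = i then 1 else 0)
          = if f v = i then p else 0 from by
      by_cases hv : f v = i
      · simp only [hv, true_and, if_pos]
        rw [← Finset.card_filter]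
        exact count2 v hv
      · simp [hv])]
    rw [← Finset.sum_filter, Finset.sum_const, smul_eq_mul, mul_comm]
  have hc2' : ∑ v, ∑ u ∈ G.neighborFinset v, (if f u = i ∧ ¬ g v = i then 1 else 0)
      = (univ.filter fun v => ¬ f v = i ∧ ¬ g v = i).card := by
    rw [Finset.sum_congr rfl (fun v (_ : v ∈ univ) => show
        ∑ u ∈ G.neighborFinset v, (if f u = i ∧ ¬ g v = i then 1 else 0)
          = if ¬ f v = i ∧ ¬ g v = i then 1 else 0 from by
      by_cases hv : g v = i
      · simp [hv]
      · by_cases hv2 : f v = i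
        · simp only [hv, not_false_iff, and_true, hv2, not_true, false_and, if_false]
          have h0 : ncA G f v i = 0 := by rw [← hv2]; exact nc_self v
          rw [ncA_def] at h0
          rw [← Finset.card_filter]
          exact h0
        · simp only [hv, not_false_iff, and_true, hv2, if_pos]
          have h1 : ncA G f v i = 1 := nonheavy v i (fun e => hv2 e.symm) (fun e => hv e.symm)
          rw [ncA_def] at h1
          rw [← Finset.card_filter]
          exact h1)]
    rw [← Finset.card_filter]
  have hrest : p * (univ.filter fun v => f v = i).card
      = (univ.filter fun v => ¬ f v = i ∧ ¬ g v = i).card := by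
    rw [← hc2, swap (fun v u => if f v = i ∧ ¬ g u = i then 1 else 0), hc2']
  -- partition of the vertex set
  have hpa : (univ.filter fun v => f v = i).card + (univ.filter fun v => ¬ f v = i).card
      = n := by
    have h := Finset.card_filter_add_card_filter_not
      (s := (univ : Finset V)) (p := fun v => f v = i)
    rw [card_univ] at h
    exact h
  have hpb : (univ.filter fun v => g v = i).card
      + (univ.filter fun v => ¬ f v = i ∧ ¬ g v = i).card
      = (univ.filter fun v => ¬ f v = i).card := by
    have h := Finset.card_filter_add_card_filter_not
      (s := univ.filter fun v => ¬ f v = i) (p := fun v => g v = i)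
    rw [Finset.filter_filter, Finset.filter_filter] at h
    have e1 : (univ.filter fun v => ¬ f v = i ∧ g v = i) = univ.filter fun v => g v = i := by
      ext v
      simp only [Finset.mem_filter, mem_univ, true_and]
      exact ⟨fun hh => hh.2, fun hh => ⟨fun e => g_ne v (hh.trans e.symm), hh⟩⟩
    rw [e1] at h
    exact h
  calc (p + 2) * (univ.filter fun v => f v = i).card
      = p * (univ.filter fun v => f v = i).card
        + ((univ.filter fun v => f v = i).card + (univ.filter fun v => f v = i).card) := by
        ring
    _ = (univ.filter fun v => ¬ f v = i ∧ ¬ g v = i).card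
        + ((univ.filter fun v => g v = i).card + (univ.filter fun v => f v = i).card) := by
        rw [← hrest, hA]
    _ = n := by omega

end StarAux

theorem stmt5 {V : Type*} [Fintype V] (G : SimpleGraph V) (p : ℕ) (hp : 2 ≤ p)
    (hreg : ∀ v : V, (G.neighborSet v).ncard = 2 * p)
    (f : V → Fin (p + 2)) (hf : IsStarColoring G f) :
    (∀ i j : Fin (p + 2),
      (Finset.univ.filter fun v => f v = i).card =
        (Finset.univ.filter fun v => f v = j).card) ∧
    ∀ i : Fin (p + 2),
      (p + 2) * (Finset.univ.filter fun v => f v = i).card = Fintype.card V := by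
  classical
  have hreg' : ∀ v : V, (G.neighborFinset v).card = 2 * p := by
    intro v
    rw [SimpleGraph.neighborFinset_def, ← Set.ncard_eq_toFinset_card', hreg v]
  have key := keyA G hp hreg' f hf
  refine ⟨fun i j => ?_, key⟩
  have := (key i).trans (key j).symm
  exact Nat.eq_of_mul_eq_mul_left (by omega) this
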